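/- Averaging and restriction commute: for every TUX game w on player set N and every player i ∈ N, the subgame of the average game equals the average game of the restricted TUX game, i.e., (v̄_w)_{−i} = v̄_{(w_{−i})} as TU games on N\{i}. -/

import Mathlib

open Finset BigOperators

namespace TUX

/-- A (raw) game in partition function form: assigns a real worth to each
coalition together with a partition (of the outside players). -/
abbrev Game := Finset ℕ → Finset (Finset ℕ) → ℝ

/-- A TU game (characteristic function). -/
abbrev TUGame := Finset ℕ → ℝ

/-- A solution for TUX games: given a player set and a game, assigns payoffs. -/
abbrev Sol := Finset ℕ → Game → ℕ → ℝ

/-- `w` is a genuine TUX game: the empty coalition has worth 0. -/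
def IsTUX (w : Game) : Prop := ∀ π, w ∅ π = 0

/-- `π` is a partition of the finite set `M`. -/
def IsPartition (M : Finset ℕ) (π : Finset (Finset ℕ)) : Prop :=
  (∀ B ∈ π, B ⊆ M) ∧ ∅ ∉ π ∧ ∀ x ∈ M, (π.filter (fun B => x ∈ B)).card = 1

instance (M : Finset ℕ) : DecidablePred (IsPartition M) := fun π => by
  unfold IsPartition; infer_instance

/-- The finite set of all partitions of `M`. -/
def partitionsOf (M : Finset ℕ) : Finset (Finset (Finset ℕ)) :=
  (M.powerset.powerset).filter (IsPartition M)

/-- The Ewens(θ = 1) probability of the partition `π` of `M`: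
`p*_M(π) = ∏_{B ∈ π} (|B| - 1)! / |M|!`. -/
noncomputable def pstar (M : Finset ℕ) (π : Finset (Finset ℕ)) : ℝ :=
  (∏ B ∈ π, ((B.card - 1).factorial : ℝ)) / (M.card.factorial : ℝ)

/-- The block of `π` containing `j` (junk if `π` is not a partition containing `j`). -/
def blockOf (π : Finset (Finset ℕ)) (j : ℕ) : Finset ℕ :=
  (π.filter (fun B => j ∈ B)).sup id

/-- Add player `i` to the block `B` of `π`. -/
def addToBlock (π : Finset (Finset ℕ)) (i : ℕ) (B : Finset ℕ) : Finset (Finset ℕ) :=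
  insert (insert i B) (π.erase B)

/-- The restriction operator `r⋆` removing a single player `i` from a game on `N`:
`w₋ᵢ(S,π) = (1/(n-s)) (w(S, π₊ᵢ⇝∅) + ∑_{j ∈ N∖(S∪{i})} w(S, π₊ᵢ⇝π(j)))`. -/
noncomputable def restrict1 (N : Finset ℕ) (w : Game) (i : ℕ) : Game :=
  fun S π =>
    ((N.card : ℝ) - (S.card : ℝ))⁻¹ *
      (w S (insert {i} π) + ∑ j ∈ (N \ S).erase i, w S (addToBlock π i (blockOf π j)))

/-- Iterated removal of a list of players. -/
noncomputable def restrictL : Finset ℕ → Game → List ℕ → Game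
  | _, w, [] => w
  | N, w, i :: l => restrictL (N.erase i) (restrict1 N w i) l

/-- Removal of a set of players (via the increasing enumeration; by path
independence of `r⋆` the order is immaterial). -/
noncomputable def restrictSet (N : Finset ℕ) (w : Game) (T : Finset ℕ) : Game :=
  restrictL N w (T.sort (· ≤ ·))

/-- The average TU game `v̄_w` of a TUX game `w` on `N`. -/
noncomputable def avg (N : Finset ℕ) (w : Game) : TUGame :=
  fun S => ∑ π ∈ partitionsOf (N \ S), pstar (N \ S) π * w S π

/-- The auxiliary TU game `v*_w(S) = w₋(N∖S)(S,∅)`. -/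
noncomputable def auxGame (N : Finset ℕ) (w : Game) : TUGame :=
  fun S => restrictSet N w (N \ S) S ∅

/-- The Shapley value of a TU game on player set `N`. -/
noncomputable def shapley (N : Finset ℕ) (v : TUGame) (i : ℕ) : ℝ :=
  ∑ S ∈ (N.erase i).powerset,
    (((S.card.factorial : ℝ) * ((N.card - S.card - 1).factorial : ℝ)) / (N.card.factorial : ℝ)) *
      (v (insert i S) - v S)

/-- The MPW solution: the Shapley value of the average game. -/
noncomputable def MPW (N : Finset ℕ) (w : Game) (i : ℕ) : ℝ := shapley N (avg N w) i

/-- The MPW solution as a solution for TUX games. -/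
noncomputable def MPWsol : Sol := fun N w i => MPW N w i

/-- The scaled Dirac TUX game `δ_{T,τ}` on `N`. -/
noncomputable def scaledDirac (N T : Finset ℕ) (τ : Finset (Finset ℕ)) : Game :=
  fun S π => if S = T ∧ π = τ then (pstar (N \ T) τ)⁻¹ else 0

/-- `τ₋S`: remove the players of `S` from each block of `τ`, discarding empty blocks. -/
def partRemove (τ : Finset (Finset ℕ)) (S : Finset ℕ) : Finset (Finset ℕ) :=
  (τ.image (fun B => B \ S)).erase ∅

/-- The Sobolev-reduced TUX game `w₋ⱼ^{So,φ}` on `N ∖ {j}`. -/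
noncomputable def sobRed (N : Finset ℕ) (φ : Sol) (w : Game) (j : ℕ) : Game :=
  fun S π =>
    ((S.card : ℝ) / ((N.card : ℝ) - 1)) * (w (insert j S) π - φ N w j) +
      (1 - (S.card : ℝ) / ((N.card : ℝ) - 1)) * restrict1 N w j S π

/-- The Hart–Mas-Colell reduced TUX game `w₋T^{HM,φ}` on `N ∖ T`. -/
noncomputable def hmRed (N : Finset ℕ) (φ : Sol) (w : Game) (T : Finset ℕ) : Game :=
  fun S π => w (S ∪ T) π - ∑ j ∈ T, φ (S ∪ T) (restrictSet N w (N \ (S ∪ T))) j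

/-- Efficiency for TUX games. -/
def EfficientX (φ : Sol) : Prop :=
  ∀ (N : Finset ℕ) (w : Game), IsTUX w → ∑ i ∈ N, φ N w i = w N ∅

/-- Balanced contributions for TUX games (w.r.t. the restriction operator `r⋆`). -/
def BalancedContributionsX (φ : Sol) : Prop :=
  ∀ (N : Finset ℕ) (w : Game), IsTUX w → ∀ i ∈ N, ∀ j ∈ N,
    φ N w i - φ (N.erase j) (restrict1 N w j) i
      = φ N w j - φ (N.erase i) (restrict1 N w i) j

/-- 2-standardness for TUX games. -/
def TwoStandardX (φ : Sol) : Prop :=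
  ∀ i j : ℕ, i ≠ j → ∀ w : Game, IsTUX w →
    φ {i, j} w i
      = w {i} {({j} : Finset ℕ)}
        + (w {i, j} ∅ - w {j} {({i} : Finset ℕ)} - w {i} {({j} : Finset ℕ)}) / 2

/-- Sobolev consistency for TUX games. -/
def SobolevConsistentX (φ : Sol) : Prop :=
  ∀ (N : Finset ℕ) (w : Game), IsTUX w → ∀ i ∈ N, ∀ j ∈ N, i ≠ j →
    φ N w i = φ (N.erase j) (sobRed N φ w j) i

/-- Hart–Mas-Colell consistency (single-player removal) for TUX games. -/
def HMConsistentX (φ : Sol) : Prop :=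
  ∀ (N : Finset ℕ) (w : Game), IsTUX w → ∀ i ∈ N, ∀ j ∈ N, i ≠ j →
    φ N w i = φ (N.erase j) (hmRed N φ w {j}) i

/-- Set Hart–Mas-Colell consistency (removal of a coalition) for TUX games. -/
def SetHMConsistentX (φ : Sol) : Prop :=
  ∀ (N : Finset ℕ) (w : Game), IsTUX w → ∀ i ∈ N, ∀ T ⊆ N.erase i,
    φ N w i = φ (N \ T) (hmRed N φ w T) i

/-- The finite set of embedded coalitions `(T,τ)` of `N` with `T ≠ ∅`. -/
def embeddedNE (N : Finset ℕ) : Finset (Finset ℕ × Finset (Finset ℕ)) :=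
  (N.powerset ×ˢ N.powerset.powerset).filter
    (fun p => p.1.Nonempty ∧ IsPartition (N \ p.1) p.2)

end TUX

namespace TUX

section Helpers

variable {M M' : Finset ℕ} {π σ : Finset (Finset ℕ)} {i x : ℕ} {B C : Finset ℕ}

lemma mem_partitionsOf : π ∈ partitionsOf M ↔ IsPartition M π := by
  constructor
  · exact fun h => (mem_filter.1 h).2
  · intro h
    refine mem_filter.2 ⟨?_, h⟩
    exact mem_powerset.2 fun B hB => mem_powerset.2 (h.1 B hB)

lemma IsPartition.block_unique (h : IsPartition M π) (hB : B ∈ π) (hC : C ∈ π)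
    (hxB : x ∈ B) (hxC : x ∈ C) : B = C := by
  have hxM : x ∈ M := h.1 B hB hxB
  obtain ⟨D, hD⟩ := card_eq_one.1 (h.2.2 x hxM)
  have h1 : B ∈ ({D} : Finset (Finset ℕ)) := hD ▸ mem_filter.2 ⟨hB, hxB⟩
  have h2 : C ∈ ({D} : Finset (Finset ℕ)) := hD ▸ mem_filter.2 ⟨hC, hxC⟩
  rw [mem_singleton] at h1 h2
  rw [h1, h2]

lemma IsPartition.blockOf_mem (h : IsPartition M π) (hx : x ∈ M) :
    blockOf π x ∈ π ∧ x ∈ blockOf π x := by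
  obtain ⟨D, hD⟩ := card_eq_one.1 (h.2.2 x hx)
  have hD' : D ∈ π.filter (fun B => x ∈ B) := hD ▸ mem_singleton_self D
  rw [blockOf, hD, sup_singleton]
  exact ⟨(mem_filter.1 hD').1, (mem_filter.1 hD').2⟩

lemma IsPartition.blockOf_eq (h : IsPartition M π) (hB : B ∈ π) (hx : x ∈ B) :
    blockOf π x = B := by
  have hxM := h.1 B hB hx
  obtain ⟨hm, hmem⟩ := h.blockOf_mem hxM
  exact h.block_unique hm hB hmem hx

lemma IsPartition.exists_block {M : Finset ℕ} {π : Finset (Finset ℕ)} {x : ℕ}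
    (h : IsPartition M π) (hx : x ∈ M) : ∃ B ∈ π, x ∈ B :=
  ⟨blockOf π x, (h.blockOf_mem hx).1, (h.blockOf_mem hx).2⟩

lemma filter_card_one (hB : B ∈ π) (hx : x ∈ B) (huniq : ∀ C ∈ π, x ∈ C → C = B) :
    (π.filter (fun C => x ∈ C)).card = 1 := by
  rw [card_eq_one]
  refine ⟨B, ?_⟩
  ext C
  simp only [mem_filter, mem_singleton]
  exact ⟨fun h => huniq C h.1 h.2, fun h => h ▸ ⟨hB, hx⟩⟩

lemma not_mem_block_of_not_mem (h : IsPartition M' σ) (hi : i ∉ M') (hB : B ∈ σ) : i ∉ B :=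
  fun hiB => hi (h.1 B hB hiB)

lemma isPartition_insert_singleton (h : IsPartition M' σ) (hi : i ∉ M') :
    IsPartition (insert i M') (insert {i} σ) := by
  have hib : ∀ B ∈ σ, i ∉ B := fun B hB => not_mem_block_of_not_mem h hi hB
  refine ⟨?_, ?_, ?_⟩
  · intro B hB
    rcases mem_insert.1 hB with rfl | hB
    · exact singleton_subset_iff.2 (mem_insert_self i M')
    · exact (h.1 B hB).trans (subset_insert _ _)
  · intro hmem
    rcases mem_insert.1 hmem with h0 | h0
    · exact (singleton_ne_empty i) h0.symm
    · exact h.2.1 h0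
  · intro x hx
    rcases mem_insert.1 hx with rfl | hx
    · refine filter_card_one (mem_insert_self _ _) (mem_singleton_self x) ?_
      intro C hC hxC
      rcases mem_insert.1 hC with rfl | hC
      · rfl
      · exact absurd hxC (hib C hC)
    · have hxi : x ≠ i := fun h' => hi (h' ▸ hx)
      obtain ⟨D, hD, hxD⟩ := h.exists_block hx
      refine filter_card_one (mem_insert_of_mem hD) hxD ?_
      intro C hC hxC
      rcases mem_insert.1 hC with rfl | hC
      · exact absurd (mem_singleton.1 hxC) hxi
      · exact h.block_unique hC hD hxC hxD

lemma isPartition_addToBlock (h : IsPartition M' σ) (hi : i ∉ M') (hB : B ∈ σ) :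
    IsPartition (insert i M') (addToBlock σ i B) := by
  have hib : ∀ C ∈ σ, i ∉ C := fun C hC => not_mem_block_of_not_mem h hi hC
  refine ⟨?_, ?_, ?_⟩
  · intro C hC
    rcases mem_insert.1 hC with rfl | hC
    · exact insert_subset_insert i (h.1 B hB)
    · exact (h.1 C (mem_of_mem_erase hC)).trans (subset_insert _ _)
  · intro hmem
    rcases mem_insert.1 hmem with h0 | h0
    · exact (insert_ne_empty i B) h0.symm
    · exact h.2.1 (mem_of_mem_erase h0)
  · intro x hx
    rcases mem_insert.1 hx with rfl | hx
    · refine filter_card_one (mem_insert_self _ _) (mem_insert_self x B) ?_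
      intro C hC hxC
      rcases mem_insert.1 hC with rfl | hC
      · rfl
      · exact absurd hxC (hib C (mem_of_mem_erase hC))
    · have hxi : x ≠ i := fun h' => hi (h' ▸ hx)
      by_cases hxB : x ∈ B
      · refine filter_card_one (mem_insert_self _ _) (mem_insert_of_mem hxB) ?_
        intro C hC hxC
        rcases mem_insert.1 hC with rfl | hC
        · rfl
        · exact absurd (ne_of_mem_erase hC) (not_not.2
            (h.block_unique (mem_of_mem_erase hC) hB hxC hxB))
      · obtain ⟨D, hD, hxD⟩ := h.exists_block hx
        have hDB : D ≠ B := fun h' => hxB (h' ▸ hxD)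
        refine filter_card_one (mem_insert_of_mem (mem_erase.2 ⟨hDB, hD⟩)) hxD ?_
        intro C hC hxC
        rcases mem_insert.1 hC with rfl | hC
        · rcases mem_insert.1 hxC with rfl | hxC
          · exact absurd rfl hxi
          · exact absurd hxC hxB
        · exact h.block_unique (mem_of_mem_erase hC) hD hxC hxD

lemma pstar_insert_singleton (h : IsPartition M' σ) (hi : i ∉ M') :
    pstar (insert i M') (insert {i} σ) = pstar M' σ / ((M'.card : ℝ) + 1) := by
  have hnot : {i} ∉ σ := fun hm => hi (h.1 _ hm (mem_singleton_self i))
  rw [pstar, pstar, prod_insert hnot, card_insert_of_notMem hi]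
  have hfac : ((M'.card + 1).factorial : ℝ) = ((M'.card : ℝ) + 1) * (M'.card.factorial : ℝ) := by
    rw [Nat.factorial_succ]; push_cast; ring
  rw [hfac]
  have h1 : (M'.card.factorial : ℝ) ≠ 0 := Nat.cast_ne_zero.2 (Nat.factorial_ne_zero _)
  have h2 : ((M'.card : ℝ) + 1) ≠ 0 := by positivity
  have h3 : (((({i} : Finset ℕ).card - 1).factorial : ℕ) : ℝ) = 1 := by norm_num
  rw [h3, one_mul, div_div, mul_comm]

lemma pstar_addToBlock (h : IsPartition M' σ) (hi : i ∉ M') (hB : B ∈ σ) :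
    pstar (insert i M') (addToBlock σ i B)
      = (B.card : ℝ) * pstar M' σ / ((M'.card : ℝ) + 1) := by
  have hiB : i ∉ B := not_mem_block_of_not_mem h hi hB
  have hnot : insert i B ∉ σ.erase B := fun hm =>
    not_mem_block_of_not_mem h hi (mem_of_mem_erase hm) (mem_insert_self i B)
  have hBpos : 0 < B.card := card_pos.2 (nonempty_of_ne_empty (fun h0 => h.2.1 (h0 ▸ hB)))
  rw [pstar, pstar, addToBlock, prod_insert hnot, card_insert_of_notMem hi,
    card_insert_of_notMem hiB]
  have hcard : B.card + 1 - 1 = B.card := by omega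
  rw [hcard]
  have hBfac : (B.card.factorial : ℝ) = (B.card : ℝ) * ((B.card - 1).factorial : ℝ) := by
    obtain ⟨k, hk⟩ : ∃ k, B.card = k + 1 := ⟨B.card - 1, by omega⟩
    rw [hk, Nat.add_sub_cancel, Nat.factorial_succ]
    push_cast
    ring
  have hprod : (∏ C ∈ σ, ((C.card - 1).factorial : ℝ))
      = ((B.card - 1).factorial : ℝ) * ∏ C ∈ σ.erase B, ((C.card - 1).factorial : ℝ) :=
    (mul_prod_erase σ _ hB).symm
  have hfac : ((M'.card + 1).factorial : ℝ) = ((M'.card : ℝ) + 1) * (M'.card.factorial : ℝ) := by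
    rw [Nat.factorial_succ]; push_cast; ring
  rw [hfac, hprod, hBfac]
  have h1 : (M'.card.factorial : ℝ) ≠ 0 := Nat.cast_ne_zero.2 (Nat.factorial_ne_zero _)
  have h2 : ((M'.card : ℝ) + 1) ≠ 0 := by positivity
  field_simp

/-- Remove player `i` from a partition. -/
def remP (i : ℕ) (π : Finset (Finset ℕ)) : Finset (Finset ℕ) :=
  (π.image (fun B => B.erase i)).erase ∅

/-- Extend a partition by `i`: join block `B`, or start a singleton if `B = ∅`. -/
def extP (i : ℕ) (σ : Finset (Finset ℕ)) (B : Finset ℕ) : Finset (Finset ℕ) :=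
  if B = ∅ then insert {i} σ else addToBlock σ i B

lemma remP_eq (h : IsPartition M π) (hi : i ∈ M) :
    remP i π = if blockOf π i = {i} then π.erase (blockOf π i)
               else insert ((blockOf π i).erase i) (π.erase (blockOf π i)) := by
  obtain ⟨hB0mem, hiB0⟩ := h.blockOf_mem hi
  set B0 := blockOf π i with hB0
  have key : ∀ B ∈ π.erase B0, i ∉ B := fun B hB hiB =>
    (ne_of_mem_erase hB) (h.block_unique (mem_of_mem_erase hB) hB0mem hiB hiB0)
  have himg : (π.erase B0).image (fun B => B.erase i) = π.erase B0 := by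
    have heq : (π.erase B0).image (fun B => B.erase i) = (π.erase B0).image id :=
      Finset.image_congr (fun B hB => Finset.erase_eq_of_notMem (key B hB))
    rw [heq, Finset.image_id]
  have himg2 : π.image (fun B => B.erase i) = insert (B0.erase i) (π.erase B0) := by
    conv_lhs => rw [← Finset.insert_erase hB0mem]
    rw [Finset.image_insert, himg]
  have hne : (∅ : Finset ℕ) ∉ π.erase B0 := fun h0 => h.2.1 (mem_of_mem_erase h0)
  rw [remP, himg2]
  by_cases hcase : B0 = {i}
  · rw [if_pos hcase, hcase, Finset.erase_singleton]
    exact Finset.erase_insert (by rw [← hcase]; exact hne)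
  · rw [if_neg hcase]
    have hne2 : B0.erase i ≠ ∅ := by
      intro h0
      apply hcase
      apply Finset.Subset.antisymm
      · intro x hx
        rcases eq_or_ne x i with rfl | hxi
        · exact mem_singleton_self x
        · exact absurd (mem_erase.2 ⟨hxi, hx⟩) (h0 ▸ notMem_empty x)
      · exact singleton_subset_iff.2 hiB0
    apply Finset.erase_eq_of_notMem
    intro h0
    rcases mem_insert.1 h0 with h0 | h0
    · exact hne2 h0.symm
    · exact hne h0

lemma extP_fwd (h : IsPartition M π) (hi : i ∈ M) :
    IsPartition (M.erase i) (remP i π) ∧ (blockOf π i).erase i ∈ insert ∅ (remP i π) ∧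
      extP i (remP i π) ((blockOf π i).erase i) = π := by
  obtain ⟨hB0mem, hiB0⟩ := h.blockOf_mem hi
  set B0 := blockOf π i with hB0
  have key : ∀ B ∈ π.erase B0, i ∉ B := fun B hB hiB =>
    (ne_of_mem_erase hB) (h.block_unique (mem_of_mem_erase hB) hB0mem hiB hiB0)
  rw [remP_eq h hi, ← hB0]
  by_cases hcase : B0 = {i}
  · rw [if_pos hcase]
    have hpart : IsPartition (M.erase i) (π.erase B0) := by
      refine ⟨?_, ?_, ?_⟩
      · intro B hB x hx
        exact mem_erase.2 ⟨fun h' => key B hB (h' ▸ hx), h.1 B (mem_of_mem_erase hB) hx⟩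
      · exact fun h0 => h.2.1 (mem_of_mem_erase h0)
      · intro x hx
        obtain ⟨hxi, hxM⟩ := mem_erase.1 hx
        obtain ⟨D, hD, hxD⟩ := h.exists_block hxM
        have hDB0 : D ≠ B0 := fun h' => hxi (by
          have := h' ▸ hxD
          rw [hcase] at this
          exact mem_singleton.1 this)
        refine filter_card_one (mem_erase.2 ⟨hDB0, hD⟩) hxD ?_
        intro C hC hxC
        exact h.block_unique (mem_of_mem_erase hC) hD hxC hxD
    refine ⟨hpart, ?_, ?_⟩
    · rw [hcase, Finset.erase_singleton]
      exact mem_insert_self _ _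
    · rw [hcase, Finset.erase_singleton, extP, if_pos rfl, ← hcase, Finset.insert_erase hB0mem]
  · rw [if_neg hcase]
    have hne2 : B0.erase i ≠ ∅ := by
      intro h0
      apply hcase
      apply Finset.Subset.antisymm
      · intro x hx
        rcases eq_or_ne x i with rfl | hxi
        · exact mem_singleton_self x
        · exact absurd (mem_erase.2 ⟨hxi, hx⟩) (h0 ▸ notMem_empty x)
      · exact singleton_subset_iff.2 hiB0
    have hnotmem : B0.erase i ∉ π.erase B0 := by
      intro hmem
      obtain ⟨x, hx⟩ := nonempty_of_ne_empty hne2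
      have := h.block_unique (mem_of_mem_erase hmem) hB0mem hx (mem_of_mem_erase hx)
      exact (ne_of_mem_erase hmem) this
    have hpart : IsPartition (M.erase i) (insert (B0.erase i) (π.erase B0)) := by
      refine ⟨?_, ?_, ?_⟩
      · intro B hB x hx
        rcases mem_insert.1 hB with rfl | hB
        · exact mem_erase.2 ⟨(mem_erase.1 hx).1, h.1 B0 hB0mem (mem_of_mem_erase hx)⟩
        · exact mem_erase.2 ⟨fun h' => key B hB (h' ▸ hx), h.1 B (mem_of_mem_erase hB) hx⟩
      · intro h0
        rcases mem_insert.1 h0 with h0 | h0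
        · exact hne2 h0.symm
        · exact h.2.1 (mem_of_mem_erase h0)
      · intro x hx
        obtain ⟨hxi, hxM⟩ := mem_erase.1 hx
        by_cases hxB0 : x ∈ B0
        · refine filter_card_one (mem_insert_self _ _) (mem_erase.2 ⟨hxi, hxB0⟩) ?_
          intro C hC hxC
          rcases mem_insert.1 hC with rfl | hC
          · rfl
          · exact absurd (h.block_unique (mem_of_mem_erase hC) hB0mem hxC hxB0)
              (ne_of_mem_erase hC)
        · obtain ⟨D, hD, hxD⟩ := h.exists_block hxM
          have hDB0 : D ≠ B0 := fun h' => hxB0 (h' ▸ hxD)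
          refine filter_card_one (mem_insert_of_mem (mem_erase.2 ⟨hDB0, hD⟩)) hxD ?_
          intro C hC hxC
          rcases mem_insert.1 hC with rfl | hC
          · exact absurd (mem_of_mem_erase hxC) hxB0
          · exact h.block_unique (mem_of_mem_erase hC) hD hxC hxD
    refine ⟨hpart, mem_insert_of_mem (mem_insert_self _ _), ?_⟩
    rw [extP, if_neg hne2, addToBlock, Finset.insert_erase hiB0,
      Finset.erase_insert hnotmem, Finset.insert_erase hB0mem]

lemma extP_bwd (h : IsPartition M' σ) (hi : i ∉ M') (hB : B ∈ insert ∅ σ) :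
    IsPartition (insert i M') (extP i σ B) ∧
      (blockOf (extP i σ B) i).erase i = B ∧ remP i (extP i σ B) = σ := by
  have hiM : i ∈ insert i M' := mem_insert_self i M'
  rcases mem_insert.1 hB with rfl | hB
  · rw [extP, if_pos rfl]
    have hpart := isPartition_insert_singleton h hi
    have hbl : blockOf (insert {i} σ) i = {i} :=
      hpart.blockOf_eq (mem_insert_self _ _) (mem_singleton_self i)
    refine ⟨hpart, by rw [hbl, Finset.erase_singleton], ?_⟩
    rw [remP_eq hpart hiM, hbl, if_pos rfl]
    exact Finset.erase_insert (fun hm => hi (h.1 _ hm (mem_singleton_self i)))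
  · have hBne : B ≠ ∅ := fun h0 => h.2.1 (h0 ▸ hB)
    rw [extP, if_neg hBne]
    have hpart := isPartition_addToBlock h hi hB
    have hiB : i ∉ B := not_mem_block_of_not_mem h hi hB
    have hbl : blockOf (addToBlock σ i B) i = insert i B :=
      hpart.blockOf_eq (mem_insert_self _ _) (mem_insert_self i B)
    have hiBne : insert i B ≠ {i} := by
      intro h0
      obtain ⟨x, hx⟩ := nonempty_of_ne_empty hBne
      have : x ∈ ({i} : Finset ℕ) := h0 ▸ mem_insert_of_mem hx
      exact hiB ((mem_singleton.1 this) ▸ hx)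
    have hnot2 : insert i B ∉ σ.erase B := fun hm =>
      not_mem_block_of_not_mem h hi (mem_of_mem_erase hm) (mem_insert_self i B)
    refine ⟨hpart, by rw [hbl, Finset.erase_insert hiB], ?_⟩
    rw [remP_eq hpart hiM, hbl, if_neg hiBne, Finset.erase_insert hiB, addToBlock,
      Finset.erase_insert hnot2]
    exact Finset.insert_erase hB

lemma fiber_eq (h : IsPartition M' σ) (hB : B ∈ σ) :
    M'.filter (fun j => blockOf σ j = B) = B := by
  ext j
  simp only [mem_filter]
  constructor
  · rintro ⟨hj, rfl⟩
    exact (h.blockOf_mem hj).2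
  · intro hj
    exact ⟨h.1 B hB hj, h.blockOf_eq hB hj⟩

lemma sum_blockOf (h : IsPartition M' σ) (F : Finset ℕ → ℝ) :
    ∑ j ∈ M', F (blockOf σ j) = ∑ B ∈ σ, (B.card : ℝ) * F B := by
  rw [← Finset.sum_fiberwise_of_maps_to (g := fun j => blockOf σ j)
    (fun j hj => (h.blockOf_mem hj).1) (fun j => F (blockOf σ j))]
  refine Finset.sum_congr rfl fun B hB => ?_
  have : ∀ j ∈ M'.filter (fun j => blockOf σ j = B), F (blockOf σ j) = F B := by
    intro j hj
    rw [(mem_filter.1 hj).2]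
  rw [Finset.sum_congr rfl this, Finset.sum_const, fiber_eq h hB, nsmul_eq_mul]

end Helpers

end TUX

open TUX in
/-- Averaging and restriction commute:
`(v̄_w)₋ᵢ = v̄_{w₋ᵢ}` as TU games on `N ∖ {i}`. -/
theorem avg_restrict_comm (N : Finset ℕ) (w : Game) (hw : IsTUX w) (i : ℕ) (hi : i ∈ N) :
    ∀ S ⊆ N.erase i, avg N w S = avg (N.erase i) (restrict1 N w i) S := by
  intro S hS
  have hiS : i ∉ S := fun h => (mem_erase.1 (hS h)).1 rfl
  have hSN : S ⊆ N := hS.trans (erase_subset i N)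
  set M' : Finset ℕ := (N.erase i) \ S with hM'
  have hiM' : i ∉ M' := fun h => (mem_erase.1 (mem_sdiff.1 h).1).1 rfl
  have hMM : N \ S = insert i M' := by
    ext x
    simp only [hM', mem_sdiff, mem_erase, mem_insert]
    constructor
    · rintro ⟨hxN, hxS⟩
      rcases eq_or_ne x i with rfl | hxi
      · exact Or.inl rfl
      · exact Or.inr ⟨⟨hxi, hxN⟩, hxS⟩
    · rintro (rfl | ⟨⟨hxi, hxN⟩, hxS⟩)
      · exact ⟨hi, hiS⟩
      · exact ⟨hxN, hxS⟩
  have hMe : (N \ S).erase i = M' := by rw [hMM, Finset.erase_insert hiM']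
  have hcardN : N.card = S.card + (M'.card + 1) := by
    have h1 : (N \ S).card = N.card - S.card := card_sdiff_of_subset hSN
    have h2 : (N \ S).card = M'.card + 1 := by rw [hMM, card_insert_of_notMem hiM']
    have h3 : S.card ≤ N.card := card_le_card hSN
    omega
  have hcard : (N.card : ℝ) - (S.card : ℝ) = (M'.card : ℝ) + 1 := by
    rw [hcardN]; push_cast; ring
  have hm0 : ((M'.card : ℝ) + 1) ≠ 0 := by positivity
  rw [avg, avg, hMM, ← hM']
  have step1 : ∑ π ∈ partitionsOf (insert i M'), pstar (insert i M') π * w S π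
      = ∑ p ∈ (partitionsOf M').sigma (fun σ => insert ∅ σ),
          pstar (insert i M') (extP i p.1 p.2) * w S (extP i p.1 p.2) := by
    refine Finset.sum_nbij'
      (fun π => (⟨remP i π, (blockOf π i).erase i⟩ : Σ _ : Finset (Finset ℕ), Finset ℕ))
      (fun p => extP i p.1 p.2) ?_ ?_ ?_ ?_ ?_
    · intro π hπ
      have hπ' := mem_partitionsOf.1 hπ
      obtain ⟨h1, h2, _⟩ := extP_fwd hπ' (mem_insert_self i M')
      rw [Finset.erase_insert hiM'] at h1
      exact Finset.mem_sigma.2 ⟨mem_partitionsOf.2 h1, h2⟩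
    · intro p hp
      obtain ⟨hp1, hp2⟩ := Finset.mem_sigma.1 hp
      exact mem_partitionsOf.2 (extP_bwd (mem_partitionsOf.1 hp1) hiM' hp2).1
    · intro π hπ
      exact (extP_fwd (mem_partitionsOf.1 hπ) (mem_insert_self i M')).2.2
    · intro p hp
      obtain ⟨hp1, hp2⟩ := Finset.mem_sigma.1 hp
      obtain ⟨_, h2, h3⟩ := extP_bwd (mem_partitionsOf.1 hp1) hiM' hp2
      obtain ⟨σ, B⟩ := p
      simp only at h2 h3 ⊢
      rw [h2, h3]
    · intro π hπ
      rw [(extP_fwd (mem_partitionsOf.1 hπ) (mem_insert_self i M')).2.2]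
  rw [step1, Finset.sum_sigma]
  refine Finset.sum_congr rfl fun σ hσ => ?_
  have hσ' := mem_partitionsOf.1 hσ
  have hσ0 : (∅ : Finset ℕ) ∉ σ := hσ'.2.1
  rw [Finset.sum_insert hσ0]
  have hext0 : extP i σ ∅ = insert {i} σ := if_pos rfl
  have hsum : ∀ B ∈ σ, pstar (insert i M') (extP i σ B) * w S (extP i σ B)
      = pstar M' σ * (((M'.card : ℝ) + 1)⁻¹ *
          ((B.card : ℝ) * w S (addToBlock σ i B))) := by
    intro B hB
    have hBne : B ≠ ∅ := fun h0 => hσ0 (h0 ▸ hB)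
    rw [extP, if_neg hBne, pstar_addToBlock hσ' hiM' hB]
    field_simp
  rw [Finset.sum_congr rfl hsum, hext0, pstar_insert_singleton hσ' hiM',
    restrict1, hcard, hMe, sum_blockOf hσ' (fun B => w S (addToBlock σ i B)),
    ← Finset.mul_sum, ← Finset.mul_sum]
  field_simp
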